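/- For all α ∈ [0,1] and δ ∈ [α/2, 1/2], there exists C ∈ (0,∞) such that: for all λ > 0, ε ∈ (0,1), t > 0, if f solves ε² f'' + f' + λ f = 0 with f(0) = 0, ε f'(0) = 1, then λ^{δ − α/2} |f(t)/ε − e^{−λ t}| ≤ C t^{−δ} ε^{α}. -/

import Mathlib

open Real

lemma exp_neg_le_rpow {γ u : ℝ} (h0 : 0 ≤ γ) (h1 : γ ≤ 3/2) (hu : 0 < u) :
    Real.exp (-u) ≤ u ^ (-γ) := by
  rw [Real.rpow_def_of_pos hu]
  apply Real.exp_le_exp.2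
  have key : γ * Real.log u ≤ u := by
    rcases le_or_gt u 1 with h | h
    · have hlog : Real.log u ≤ 0 := Real.log_nonpos hu.le h
      nlinarith [mul_nonneg h0 (neg_nonneg.2 hlog)]
    · have hw : 0 < Real.sqrt u := Real.sqrt_pos.2 hu
      have hlw : Real.log (Real.sqrt u) ≤ Real.sqrt u - 1 :=
        Real.log_le_sub_one_of_pos hw
      have hlu : Real.log u = 2 * Real.log (Real.sqrt u) := by
        rw [← Real.sq_sqrt hu.le, Real.log_pow]; push_cast; ring_nf; rw [Real.sq_sqrt hu.le]
      have hw2 : Real.sqrt u ^ 2 = u := Real.sq_sqrt hu.le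
      have hlogpos : 0 ≤ Real.log u := Real.log_nonneg h.le
      nlinarith [sq_nonneg (Real.sqrt u - 3/2), mul_le_mul_of_nonneg_left hlw (by linarith : (0:ℝ) ≤ 2*γ)]
  linarith

lemma split_pow {ε lam : ℝ} (hε : 0 < ε) (hl : 0 < lam) (p q : ℝ) :
    ε ^ p * lam ^ q = ε ^ (p - 2*q) * (ε^2*lam) ^ q := by
  rw [Real.mul_rpow (by positivity) hl.le, ← Real.rpow_natCast ε 2, ← Real.rpow_mul hε.le,
    ← mul_assoc, ← Real.rpow_add hε]
  norm_num

lemma base_ge {x q : ℝ} (hx : (1:ℝ)/8 ≤ x) (hq : -1 ≤ q) (hq0 : q ≤ 0) : x ^ q ≤ 8 := by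
  have h8 : ((1:ℝ)/8) ^ q = 8 ^ (-q) := by
    rw [one_div, ← Real.rpow_neg_one 8, ← Real.rpow_mul (by norm_num), neg_one_mul]
  calc x ^ q ≤ ((1:ℝ)/8) ^ q := Real.rpow_le_rpow_of_nonpos (by norm_num) hx hq0
    _ = 8 ^ (-q) := h8
    _ ≤ 8 ^ (1:ℝ) := Real.rpow_le_rpow_of_exponent_le (by norm_num) (by linarith)
    _ = 8 := Real.rpow_one 8

lemma regime1 {lam ε t : ℝ} {f f' f'' : ℝ → ℝ} (hl : 0 < lam) (hε : 0 < ε)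
    (hx : 1/8 ≤ ε^2*lam) (ht : 0 ≤ t)
    (hf : ∀ s, HasDerivAt f (f' s) s) (hf' : ∀ s, HasDerivAt f' (f'' s) s)
    (hode : ∀ s, ε^2*f'' s + f' s + lam * f s = 0) (h0 : f 0 = 0) (h1 : ε * f' 0 = 1) :
    lam * (f t)^2 ≤ 4 * Real.exp (-(t/(4*ε^2))) := by
  have he2 : (0:ℝ) < ε^2 := by positivity
  set H : ℝ → ℝ := fun s => ε^2*(f' s)^2 + lam*(f s)^2 + (1/2)*(f s * f' s) with hH
  set G : ℝ → ℝ := fun s => H s * Real.exp (s/(4*ε^2)) with hGdef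
  set D : ℝ → ℝ := fun s => ε^2*(2*f' s*f'' s) + lam*(2*f s*f' s)
      + (1/2)*(f' s*f' s + f s*f'' s) with hD
  have hHd : ∀ s, HasDerivAt H (D s) s := by
    intro s
    have h1 : HasDerivAt (fun y => ε^2*(f' y)^2) (ε^2*(2*f' s*f'' s)) s := by
      have := ((hf' s).pow 2).const_mul (ε^2)
      exact this.congr_deriv (by push_cast; ring)
    have h2 : HasDerivAt (fun y => lam*(f y)^2) (lam*(2*f s*f' s)) s := by
      have := ((hf s).pow 2).const_mul lam
      exact this.congr_deriv (by push_cast; ring)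
    have h3 : HasDerivAt (fun y => (1/2)*(f y * f' y)) ((1/2)*(f' s*f' s + f s*f'' s)) s := by
      have := ((hf s).mul (hf' s)).const_mul (1/2:ℝ)
      exact this.congr_deriv (by ring)
    exact (h1.add h2).add h3
  have hGd : ∀ s, HasDerivAt G (D s * Real.exp (s/(4*ε^2))
      + H s * (Real.exp (s/(4*ε^2)) * (1/(4*ε^2)))) s := by
    intro s
    have he : HasDerivAt (fun y => Real.exp (y/(4*ε^2))) (Real.exp (s/(4*ε^2)) * (1/(4*ε^2))) s := by
      have := ((hasDerivAt_id s).div_const (4*ε^2)).exp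
      convert this using 1 <;> simp
    exact (hHd s).mul he
  have hpsd : ∀ s, 0 ≤ 5*ε^2*(f' s)^2 + (3/2)*(f s)*(f' s) + lam*(f s)^2 := by
    intro s
    have hmul : 0 ≤ ε^2 * (5*ε^2*(f' s)^2 + (3/2)*(f s)*(f' s) + lam*(f s)^2) := by
      nlinarith [sq_nonneg (ε^2*f' s + f s/6), sq_nonneg (ε^2*f' s),
        mul_nonneg (sub_nonneg.2 hx) (sq_nonneg (f s))]
    exact nonneg_of_mul_nonneg_right hmul he2
  have hanti : Antitone G := by
    apply antitone_of_deriv_nonpos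
    · exact fun s => ((hGd s).differentiableAt)
    · intro s
      rw [(hGd s).deriv]
      have keyeq : 4*ε^2*(D s) + H s
          = -(5*ε^2*(f' s)^2 + (3/2)*(f s)*(f' s) + lam*(f s)^2) := by
        have hsub := hode s
        simp only [hD, hH]
        linear_combination (8*ε^2*f' s + 2*f s) * hsub
      have key : D s + H s * (1/(4*ε^2)) ≤ 0 := by
        have heq : D s + H s * (1/(4*ε^2)) = (4*ε^2*(D s) + H s)/(4*ε^2) := by
          field_simp
        rw [heq, keyeq]
        apply div_nonpos_of_nonpos_of_nonneg _ (by positivity)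
        linarith [hpsd s]
      have hE : (0:ℝ) < Real.exp (s/(4*ε^2)) := Real.exp_pos _
      calc D s * Real.exp (s/(4*ε^2)) + H s * (Real.exp (s/(4*ε^2)) * (1/(4*ε^2)))
          = (D s + H s * (1/(4*ε^2))) * Real.exp (s/(4*ε^2)) := by ring
        _ ≤ 0 := mul_nonpos_of_nonpos_of_nonneg key hE.le
  have hf'0 : f' 0 = 1/ε := by field_simp at h1 ⊢; linarith
  have hG0 : G 0 = 1 := by
    simp only [hGdef, hH, h0, hf'0]
    field_simp
    simp
  have hGt : G t ≤ 1 := by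
    have := hanti ht
    rw [hG0] at this
    exact this
  have hHt : H t ≤ Real.exp (-(t/(4*ε^2))) := by
    have h2 : H t * Real.exp (t/(4*ε^2)) ≤ 1 := hGt
    have h3 := mul_le_mul_of_nonneg_right h2 (Real.exp_pos (-(t/(4*ε^2)))).le
    rw [one_mul, mul_assoc, ← Real.exp_add] at h3
    simpa using h3
  have h4H : lam * (f t)^2 ≤ 4 * H t := by
    have hmul : 0 ≤ ε^2 * (4 * H t - lam * (f t)^2) := by
      simp only [hH]
      nlinarith [sq_nonneg (2*ε^2*f' t + f t/2),
        mul_nonneg (sub_nonneg.2 hx) (sq_nonneg (f t))]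
    have := nonneg_of_mul_nonneg_right hmul he2
    linarith
  exact h4H.trans (by linarith [hHt])

lemma energy_uniq {lam ε t : ℝ} {f f' f'' g g' g'' : ℝ → ℝ} (hl : 0 < lam) (hε : 0 < ε)
    (ht : 0 ≤ t)
    (hf : ∀ s, HasDerivAt f (f' s) s) (hf' : ∀ s, HasDerivAt f' (f'' s) s)
    (hodef : ∀ s, ε^2*f'' s + f' s + lam * f s = 0)
    (hg : ∀ s, HasDerivAt g (g' s) s) (hg' : ∀ s, HasDerivAt g' (g'' s) s)
    (hodeg : ∀ s, ε^2*g'' s + g' s + lam * g s = 0)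
    (h0 : f 0 = g 0) (h1 : f' 0 = g' 0) : f t = g t := by
  have he2 : (0:ℝ) < ε^2 := by positivity
  set E : ℝ → ℝ := fun s => ε^2*(f' s - g' s)^2 + lam*(f s - g s)^2 with hE
  have hEd : ∀ s, HasDerivAt E (ε^2*(2*(f' s - g' s)*(f'' s - g'' s))
      + lam*(2*(f s - g s)*(f' s - g' s))) s := by
    intro s
    have h1 : HasDerivAt (fun y => ε^2*(f' y - g' y)^2)
        (ε^2*(2*(f' s - g' s)*(f'' s - g'' s))) s := by
      have := (((hf' s).sub (hg' s)).pow 2).const_mul (ε^2)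
      exact this.congr_deriv (by simp only [Pi.sub_apply]; push_cast; ring)
    have h2 : HasDerivAt (fun y => lam*(f y - g y)^2)
        (lam*(2*(f s - g s)*(f' s - g' s))) s := by
      have := (((hf s).sub (hg s)).pow 2).const_mul lam
      exact this.congr_deriv (by simp only [Pi.sub_apply]; push_cast; ring)
    exact h1.add h2
  have hanti : Antitone E := by
    apply antitone_of_deriv_nonpos (fun s => (hEd s).differentiableAt)
    intro s
    rw [(hEd s).deriv]
    have h3 := hodef s; have h4 := hodeg s
    have : ε^2*(2*(f' s - g' s)*(f'' s - g'' s)) + lam*(2*(f s - g s)*(f' s - g' s))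
        = -2*(f' s - g' s)^2 := by linear_combination (2*(f' s - g' s)) * (h3 - h4)
    rw [this]
    nlinarith [sq_nonneg (f' s - g' s)]
  have hE0 : E 0 = 0 := by simp [hE, h0, h1]
  have hEt : E t ≤ 0 := by
    have := hanti ht; rw [hE0] at this; exact this
  have : lam * (f t - g t)^2 ≤ 0 := by
    have : (0:ℝ) ≤ ε^2*(f' t - g' t)^2 := by positivity
    simp only [hE] at hEt
    linarith
  have h5 : (f t - g t)^2 ≤ 0 := by nlinarith
  have h6 : f t - g t = 0 := by nlinarith [sq_nonneg (f t - g t)]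
  linarith

set_option maxHeartbeats 2000000 in
lemma regime2 {lam ε t : ℝ} {f f' f'' : ℝ → ℝ} (hl : 0 < lam) (hε : 0 < ε)
    (hx : ε^2*lam ≤ 1/8) (ht : 0 < t)
    (hf : ∀ s, HasDerivAt f (f' s) s) (hf' : ∀ s, HasDerivAt f' (f'' s) s)
    (hode : ∀ s, ε^2*f'' s + f' s + lam * f s = 0) (h0 : f 0 = 0) (h1 : ε * f' 0 = 1) :
    |f t/ε - Real.exp (-(lam*t))|
      ≤ 8*(ε^2*lam)*(1+lam*t)*Real.exp (-(lam*t)) + 2*Real.exp (-(t/(2*ε^2))) := by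
  have he2 : (0:ℝ) < ε^2 := by positivity
  have hx2pos : (0:ℝ) < ε^2*lam := by positivity
  obtain ⟨r, hr2, hrhalf, hr1⟩ : ∃ r : ℝ, r^2 = 1 - 4*(ε^2*lam) ∧ 1/2 ≤ r ∧ r ≤ 1 := by
    refine ⟨Real.sqrt (1-4*(ε^2*lam)), Real.sq_sqrt (by nlinarith), ?_,
      Real.sqrt_le_one.2 (by nlinarith)⟩
    exact (Real.le_sqrt (by norm_num) (by nlinarith)).2 (by nlinarith)
  have hrpos : 0 < r := by linarith
  set μp : ℝ := (-1+r)/(2*ε^2) with hμpdef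
  set μm : ℝ := (-1-r)/(2*ε^2) with hμmdef
  have hμp : ε^2*μp^2 + μp + lam = 0 := by
    rw [hμpdef]; field_simp
    first | linear_combination hr2 | linear_combination (2*ε^4 - 1) * hr2 | nlinarith [hr2]
  have hμm : ε^2*μm^2 + μm + lam = 0 := by
    rw [hμmdef]; field_simp
    first | linear_combination hr2 | linear_combination (2*ε^4 - 1) * hr2 | nlinarith [hr2]
  clear_value μp μm
  set g : ℝ → ℝ := fun s => (ε/r)*(Real.exp (μp*s) - Real.exp (μm*s)) with hgdef
  set g' : ℝ → ℝ := fun s => (ε/r)*(μp*Real.exp (μp*s) - μm*Real.exp (μm*s)) with hg'def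
  set g'' : ℝ → ℝ := fun s => (ε/r)*(μp^2*Real.exp (μp*s) - μm^2*Real.exp (μm*s)) with hg''def
  have hexp : ∀ (μ s : ℝ), HasDerivAt (fun y => Real.exp (μ*y)) (μ*Real.exp (μ*s)) s := by
    intro μ s
    have h := ((hasDerivAt_id s).const_mul μ).exp
    simp only [id_eq, mul_one] at h
    simpa [mul_comm] using h
  have hgd : ∀ s, HasDerivAt g (g' s) s := by
    intro s
    have h := (((hexp μp s).sub (hexp μm s)).const_mul (ε/r))
    simp only [hgdef, hg'def]
    exact h.congr_deriv (by ring)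
  have hgd' : ∀ s, HasDerivAt g' (g'' s) s := by
    intro s
    have h := ((((hexp μp s).const_mul μp).sub ((hexp μm s).const_mul μm)).const_mul (ε/r))
    simp only [hg'def, hg''def]
    exact h.congr_deriv (by ring)
  have hodeg : ∀ s, ε^2*g'' s + g' s + lam * g s = 0 := by
    intro s
    simp only [hgdef, hg'def, hg''def]
    linear_combination ((ε/r)*Real.exp (μp*s))*hμp - ((ε/r)*Real.exp (μm*s))*hμm
  have hg0 : g 0 = 0 := by simp [hgdef]
  have hμpm : μp - μm = r/ε^2 := by rw [hμpdef, hμmdef]; field_simp; ring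
  have hg'0 : g' 0 = 1/ε := by
    simp only [hg'def, mul_zero, Real.exp_zero, mul_one]
    rw [hμpdef, hμmdef]
    field_simp
    ring
  clear_value g g' g''
  have hf'0 : f' 0 = 1/ε := by field_simp at h1 ⊢; linarith
  have hftgt : f t = g t :=
    energy_uniq hl hε ht.le hf hf' hode hgd hgd' hodeg (by rw [h0, hg0]) (by rw [hf'0, hg'0])
  rw [hftgt]
  have hginv : g t / ε = (1/r)*(Real.exp (μp*t) - Real.exp (μm*t)) := by
    simp only [hgdef]; field_simp
  rw [hginv]
  clear hginv hftgt hgdef hg'def hg''def hodeg hg0 hg'0 hgd hgd' hf hf' hode h0 h1 hf'0 hμp hμm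
  clear g g' g'' f f' f''
  set κ : ℝ := -(μp + lam) with hκdef
  clear_value κ
  have hμpκ : -((-1+r)/(2*ε^2) + lam) = ((1 - 2*(ε^2*lam)) - r)/(2*ε^2) := by
    field_simp; ring
  have hκ0 : 0 ≤ κ := by
    have h1r : r ≤ 1 - 2*(ε^2*lam) := by
      have ha : (0:ℝ) < 1 - 2*(ε^2*lam) + r := by linarith
      have hb : (0:ℝ) ≤ (1 - 2*(ε^2*lam))^2 - r^2 := by
        rw [hr2]; nlinarith [sq_nonneg (ε^2*lam)]
      have h3 := Real.sqrt_le_sqrt (show r^2 ≤ (1 - 2*(ε^2*lam))^2 by linarith)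
      rwa [Real.sqrt_sq hrpos.le, Real.sqrt_sq (by linarith)] at h3
    rw [hκdef, hμpdef, hμpκ]
    apply div_nonneg (by linarith) (by positivity)
  have hκ2 : κ ≤ 2*(ε^2*lam)*lam := by
    have h1r : 1 - 2*(ε^2*lam) - 4*(ε^2*lam)^2 ≤ r := by
      have hxx : (ε^2*lam)*(ε^2*lam) ≤ (1/8)*(1/8) := mul_self_le_mul_self hx2pos.le hx
      have hnn : (0:ℝ) ≤ 1 - 4*(ε^2*lam) - 4*(ε^2*lam)^2 := by nlinarith
      have hc : (0:ℝ) ≤ (ε^2*lam)^2 * (1 - 4*(ε^2*lam) - 4*(ε^2*lam)^2) :=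
        mul_nonneg (sq_nonneg _) hnn
      have ha : (0:ℝ) ≤ 1 - 2*(ε^2*lam) - 4*(ε^2*lam)^2 := by nlinarith
      have hb : (1 - 2*(ε^2*lam) - 4*(ε^2*lam)^2)^2 ≤ r^2 := by rw [hr2]; nlinarith
      have h3 := Real.sqrt_le_sqrt hb
      rwa [Real.sqrt_sq ha, Real.sqrt_sq hrpos.le] at h3
    rw [hκdef, hμpdef, hμpκ, div_le_iff₀ (by positivity)]
    have heq2 : 2*(ε^2*lam)*lam*(2*ε^2) = 4*(ε^2*lam)^2 := by ring
    rw [heq2]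
    linarith
  have hμpt : μp * t = -(lam*t) + -(κ*t) := by rw [hκdef]; ring
  have hE1 : Real.exp (μp*t) = Real.exp (-(lam*t)) * Real.exp (-(κ*t)) := by
    rw [hμpt, Real.exp_add]
  have hTermB : Real.exp (μm*t)/r ≤ 2*Real.exp (-(t/(2*ε^2))) := by
    have hμmle : μm * t ≤ -(t/(2*ε^2)) := by
      rw [hμmdef, div_mul_eq_mul_div, div_le_iff₀ (by positivity)]
      have heq3 : -(t / (2 * ε ^ 2)) * (2*ε^2) = -t := by field_simp
      rw [heq3]
      nlinarith
    have h2 : Real.exp (μm*t) ≤ Real.exp (-(t/(2*ε^2))) := Real.exp_le_exp.2 hμmle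
    rw [div_le_iff₀ hrpos]
    nlinarith [Real.exp_pos (-(t/(2*ε^2)))]
  have hTermA : |Real.exp (μp*t)/r - Real.exp (-(lam*t))|
      ≤ 8*(ε^2*lam)*(1+lam*t)*Real.exp (-(lam*t)) := by
    rw [hE1]
    have key : |Real.exp (-(κ*t))/r - 1| ≤ 8*(ε^2*lam)*(1+lam*t) := by
      have hek : Real.exp (-(κ*t)) ≤ 1 := Real.exp_le_one_iff.2 (by nlinarith)
      have hek2 : 1 - κ*t ≤ Real.exp (-(κ*t)) := by
        have := Real.add_one_le_exp (-(κ*t)); linarith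
      have h1mr : 1 - r ≤ 4*(ε^2*lam) := by nlinarith
      rw [abs_le]
      constructor
      · have hlow : (1:ℝ) - κ*t ≤ Real.exp (-(κ*t))/r := by
          rw [le_div_iff₀ hrpos]
          nlinarith [Real.exp_pos (-(κ*t))]
        have hκt : κ*t ≤ 2*(ε^2*lam)*(lam*t) := by nlinarith
        nlinarith [mul_nonneg (mul_nonneg hx2pos.le hl.le) ht.le]
      · have hup : Real.exp (-(κ*t))/r ≤ 1/r := by gcongr
        have h1r2 : 1/r ≤ 1 + 8*(ε^2*lam) := by
          rw [div_le_iff₀ hrpos]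
          nlinarith
        nlinarith [mul_nonneg (mul_nonneg hx2pos.le hl.le) ht.le]
    calc |Real.exp (-(lam*t)) * Real.exp (-(κ*t))/r - Real.exp (-(lam*t))|
        = Real.exp (-(lam*t)) * |Real.exp (-(κ*t))/r - 1| := by
          rw [show Real.exp (-(lam*t)) * Real.exp (-(κ*t))/r - Real.exp (-(lam*t))
            = Real.exp (-(lam*t)) * (Real.exp (-(κ*t))/r - 1) by ring, abs_mul,
            abs_of_pos (Real.exp_pos (-(lam*t)))]
      _ ≤ Real.exp (-(lam*t)) * (8*(ε^2*lam)*(1+lam*t)) :=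
          mul_le_mul_of_nonneg_left key (Real.exp_pos _).le
      _ = 8*(ε^2*lam)*(1+lam*t)*Real.exp (-(lam*t)) := by ring
  calc |(1/r)*(Real.exp (μp*t) - Real.exp (μm*t)) - Real.exp (-(lam*t))|
      ≤ |Real.exp (μp*t)/r - Real.exp (-(lam*t))| + Real.exp (μm*t)/r := by
        have heq4 : (1/r)*(Real.exp (μp*t) - Real.exp (μm*t)) - Real.exp (-(lam*t))
            = (Real.exp (μp*t)/r - Real.exp (-(lam*t))) - Real.exp (μm*t)/r := by ring
        rw [heq4]
        calc |(Real.exp (μp*t)/r - Real.exp (-(lam*t))) - Real.exp (μm*t)/r|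
            ≤ |Real.exp (μp*t)/r - Real.exp (-(lam*t))| + |Real.exp (μm*t)/r| := abs_sub _ _
          _ = |Real.exp (μp*t)/r - Real.exp (-(lam*t))| + Real.exp (μm*t)/r := by
              rw [abs_of_pos (div_pos (Real.exp_pos _) hrpos)]
    _ ≤ 8*(ε^2*lam)*(1+lam*t)*Real.exp (-(lam*t)) + 2*Real.exp (-(t/(2*ε^2))) :=
        add_le_add hTermA hTermB

set_option maxHeartbeats 1000000 in
theorem stmt15 (α δ : ℝ) (hα : α ∈ Set.Icc (0 : ℝ) 1) (hδ : δ ∈ Set.Icc (α / 2) (1 / 2)) :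
    ∃ C : ℝ, 0 < C ∧ ∀ (lam ε t : ℝ) (f f' f'' : ℝ → ℝ),
      0 < lam → ε ∈ Set.Ioo (0 : ℝ) 1 → 0 < t →
      (∀ s, HasDerivAt f (f' s) s) → (∀ s, HasDerivAt f' (f'' s) s) →
      (∀ s, ε ^ 2 * f'' s + f' s + lam * f s = 0) →
      f 0 = 0 → ε * f' 0 = 1 →
      lam ^ (δ - α / 2) * |f t / ε - Real.exp (-(lam * t))| ≤ C * t ^ (-δ) * ε ^ α := by
  obtain ⟨hα0, hα1⟩ := hα
  obtain ⟨hδl, hδr⟩ := hδ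
  refine ⟨200, by norm_num, ?_⟩
  intro lam ε t f f' f'' hl hε ht hf hf' hode h0 h1
  obtain ⟨hε0, hε1⟩ := hε
  have hδ0 : 0 ≤ δ := le_trans (by linarith) hδl
  have hlt : 0 < lam*t := by positivity
  have hεα : (0:ℝ) < ε^α := Real.rpow_pos_of_pos hε0 α
  have htδ : (0:ℝ) < t^(-δ) := Real.rpow_pos_of_pos ht _
  have hlamp : (0:ℝ) < lam^(δ-α/2) := Real.rpow_pos_of_pos hl _
  have hx2pos : (0:ℝ) < ε^2*lam := by positivity
  have he2 : (0:ℝ) < ε^2 := by positivity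
  -- exp(-(lam t)) ≤ lam^{-δ} t^{-δ}
  have hE : Real.exp (-(lam*t)) ≤ lam^(-δ)*t^(-δ) := by
    calc Real.exp (-(lam*t)) ≤ (lam*t)^(-δ) := exp_neg_le_rpow hδ0 (by linarith) hlt
      _ = lam^(-δ)*t^(-δ) := Real.mul_rpow hl.le ht.le
  -- lam*t*exp(-(lam t)) ≤ lam^{-δ} t^{-δ}
  have hE2 : lam*t*Real.exp (-(lam*t)) ≤ lam^(-δ)*t^(-δ) := by
    have h1' : Real.exp (-(lam*t)) ≤ (lam*t)^(-(1+δ)) :=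
      exp_neg_le_rpow (by linarith) (by linarith) hlt
    have h2' : lam*t*(lam*t)^(-(1+δ)) = (lam*t)^(-δ) := by
      nth_rewrite 1 [← Real.rpow_one (lam*t)]
      rw [← Real.rpow_add hlt]
      norm_num
    calc lam*t*Real.exp (-(lam*t)) ≤ lam*t*(lam*t)^(-(1+δ)) := by
          apply mul_le_mul_of_nonneg_left h1' hlt.le
      _ = (lam*t)^(-δ) := h2'
      _ = lam^(-δ)*t^(-δ) := Real.mul_rpow hl.le ht.le
  -- key exponent identity: lam^(δ-α/2)*lam^(-δ) = lam^(-α/2)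
  have hll : lam^(δ-α/2)*lam^(-δ) = lam^(-(α/2)) := by
    rw [← Real.rpow_add hl]; ring_nf
  -- ε^2 * lam^(1-α/2) = ε^α * (ε^2*lam)^(1-α/2)
  have hsplit1 : (ε^2) * lam^(1-α/2) = ε^α * (ε^2*lam)^(1-α/2) := by
    have h := split_pow hε0 hl 2 (1-α/2)
    rw [show (2:ℝ) - 2*(1-α/2) = α by ring] at h
    rw [← h]
    congr 1
    rw [show (2:ℝ) = ((2:ℕ):ℝ) by norm_num, Real.rpow_natCast]
  -- ε^(2δ) * lam^(δ-α/2) = ε^α * (ε^2*lam)^(δ-α/2)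
  have hsplit2 : ε^(2*δ) * lam^(δ-α/2) = ε^α * (ε^2*lam)^(δ-α/2) := by
    have h := split_pow hε0 hl (2*δ) (δ-α/2)
    rw [show 2*δ - 2*(δ-α/2) = α by ring] at h
    exact h
  -- exp(-(t/(c ε^2))) ≤ c * t^(-δ) * ε^(2δ)  for c ≥ 1, c ≤ .. (δ ≤ 1)
  have hexpB : ∀ c : ℝ, 1 ≤ c → Real.exp (-(t/(c*ε^2))) ≤ c * (t^(-δ) * ε^(2*δ)) := by
    intro c hc
    have hcpos : (0:ℝ) < c := by linarith
    have hu : 0 < t/(c*ε^2) := by positivity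
    have h1' : Real.exp (-(t/(c*ε^2))) ≤ (t/(c*ε^2))^(-δ) :=
      exp_neg_le_rpow hδ0 (by linarith) hu
    have h2' : (t/(c*ε^2))^(-δ) = t^(-δ) * ((c*ε^2))^δ := by
      rw [div_eq_mul_inv, Real.mul_rpow ht.le (by positivity),
        ← Real.rpow_neg_one (c*ε^2), ← Real.rpow_mul (by positivity)]
      ring_nf
    have h3' : ((c*ε^2))^δ = c^δ * ε^(2*δ) := by
      rw [Real.mul_rpow hcpos.le he2.le, ← Real.rpow_natCast ε 2, ← Real.rpow_mul hε0.le]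
      norm_num
      try ring_nf
    have h4' : c^δ ≤ c := by
      calc c^δ ≤ c^(1:ℝ) := Real.rpow_le_rpow_of_exponent_le hc (by linarith)
        _ = c := Real.rpow_one c
    calc Real.exp (-(t/(c*ε^2))) ≤ (t/(c*ε^2))^(-δ) := h1'
      _ = t^(-δ) * (c^δ * ε^(2*δ)) := by rw [h2', h3']
      _ ≤ t^(-δ) * (c * ε^(2*δ)) := by
          apply mul_le_mul_of_nonneg_left _ htδ.le
          apply mul_le_mul_of_nonneg_right h4' (Real.rpow_pos_of_pos hε0 _).le
      _ = c * (t^(-δ) * ε^(2*δ)) := by ring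
  have he2δ : (0:ℝ) < ε^(2*δ) := Real.rpow_pos_of_pos hε0 _
  rcases le_or_gt (ε^2*lam) (1/8) with hcase | hcase
  · -- overdamped regime
    have hreg := regime2 hl hε0 hcase ht hf hf' hode h0 h1
    have hx2le1 : ε^2*lam ≤ 1 := by linarith
    have hA : lam^(δ-α/2) * (8*(ε^2*lam)*(1+lam*t)*Real.exp (-(lam*t))) ≤ 16 * (t^(-δ) * ε^α) := by
      have hP : (1+lam*t)*Real.exp (-(lam*t)) ≤ 2*(lam^(-δ)*t^(-δ)) := by
        have hexpp := (Real.exp_pos (-(lam*t))).le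
        nlinarith [hE, hE2]
      have hQ : lam^(δ-α/2) * (ε^2*lam) * lam^(-δ) ≤ ε^α := by
        have e0 : lam^(δ-α/2) * lam^(-δ) * lam^(1:ℝ) = lam^(1-α/2) := by
          rw [← Real.rpow_add hl, ← Real.rpow_add hl]; ring_nf
        have e1 : lam^(δ-α/2) * (ε^2*lam) * lam^(-δ) = ε^2 * lam^(1-α/2) := by
          rw [← e0, Real.rpow_one]; ring
        rw [e1, hsplit1]
        have h2 : (ε^2*lam)^(1-α/2) ≤ 1 := Real.rpow_le_one hx2pos.le hx2le1 (by linarith)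
        nlinarith [hεα, Real.rpow_pos_of_pos hx2pos (1-α/2)]
      calc lam^(δ-α/2) * (8*(ε^2*lam)*(1+lam*t)*Real.exp (-(lam*t)))
          ≤ lam^(δ-α/2) * (8*(ε^2*lam)*(2*(lam^(-δ)*t^(-δ)))) := by
            apply mul_le_mul_of_nonneg_left _ hlamp.le
            have h9 : (0:ℝ) ≤ 8*(ε^2*lam) := by positivity
            nlinarith [mul_le_mul_of_nonneg_left hP h9]
        _ = 16 * (lam^(δ-α/2) * (ε^2*lam) * lam^(-δ)) * t^(-δ) := by ring
        _ ≤ 16 * ε^α * t^(-δ) := by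
            have h11 := mul_le_mul_of_nonneg_right hQ htδ.le
            nlinarith [h11]
        _ = 16 * (t^(-δ) * ε^α) := by ring
    have hB : lam^(δ-α/2) * (2*Real.exp (-(t/(2*ε^2)))) ≤ 4 * (t^(-δ) * ε^α) := by
      have h1' := hexpB 2 (by norm_num)
      have h2' : ε^(2*δ) * lam^(δ-α/2) ≤ ε^α := by
        rw [hsplit2]
        have h3 : (ε^2*lam)^(δ-α/2) ≤ 1 := Real.rpow_le_one hx2pos.le hx2le1 (by linarith)
        nlinarith [hεα, Real.rpow_pos_of_pos hx2pos (δ-α/2)]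
      calc lam^(δ-α/2) * (2*Real.exp (-(t/(2*ε^2))))
          ≤ lam^(δ-α/2) * (2*(2*(t^(-δ) * ε^(2*δ)))) := by
            apply mul_le_mul_of_nonneg_left _ hlamp.le
            linarith [h1']
        _ = 4 * t^(-δ) * (ε^(2*δ) * lam^(δ-α/2)) := by ring
        _ ≤ 4 * t^(-δ) * ε^α := by
            have := mul_le_mul_of_nonneg_left h2' (show (0:ℝ) ≤ 4*t^(-δ) by positivity)
            calc 4 * t^(-δ) * (ε^(2*δ) * lam^(δ-α/2)) = 4*t^(-δ)*(ε^(2*δ) * lam^(δ-α/2)) := by ring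
              _ ≤ 4*t^(-δ)*ε^α := this
        _ = 4 * (t^(-δ) * ε^α) := by ring
    calc lam^(δ-α/2) * |f t/ε - Real.exp (-(lam*t))|
        ≤ lam^(δ-α/2) * (8*(ε^2*lam)*(1+lam*t)*Real.exp (-(lam*t)) + 2*Real.exp (-(t/(2*ε^2)))) :=
          mul_le_mul_of_nonneg_left hreg hlamp.le
      _ = lam^(δ-α/2) * (8*(ε^2*lam)*(1+lam*t)*Real.exp (-(lam*t)))
          + lam^(δ-α/2) * (2*Real.exp (-(t/(2*ε^2)))) := by ring
      _ ≤ 16*(t^(-δ)*ε^α) + 4*(t^(-δ)*ε^α) := add_le_add hA hB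
      _ ≤ 200 * t^(-δ) * ε^α := by nlinarith [mul_pos htδ hεα]
  · -- underdamped regime
    have hreg := regime1 hl hε0 hcase.le ht.le hf hf' hode h0 h1
    set X : ℝ := (ε^2*lam)^(-(1:ℝ)/2) with hXdef
    have hXpos : 0 < X := Real.rpow_pos_of_pos hx2pos _
    have hXsq : X^2 = (ε^2*lam)⁻¹ := by
      rw [hXdef, ← Real.rpow_natCast ((ε^2*lam)^(-(1:ℝ)/2)) 2, ← Real.rpow_mul hx2pos.le]
      norm_num [Real.rpow_neg_one]
    have hEsq : Real.exp (-(t/(8*ε^2)))^2 = Real.exp (-(t/(4*ε^2))) := by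
      rw [sq, ← Real.exp_add]
      congr 1
      field_simp
      ring
    have hsq : (f t/ε)^2 ≤ (2*X*Real.exp (-(t/(8*ε^2))))^2 := by
      have e1 : (f t/ε)^2 = lam*(f t)^2/(ε^2*lam) := by field_simp
      have e2 : (2*X*Real.exp (-(t/(8*ε^2))))^2 = 4*Real.exp (-(t/(4*ε^2)))/(ε^2*lam) := by
        have : (2*X*Real.exp (-(t/(8*ε^2))))^2 = 4*X^2*Real.exp (-(t/(8*ε^2)))^2 := by ring
        rw [this, hXsq, hEsq]; field_simp
      rw [e1, e2, div_le_div_iff₀ hx2pos hx2pos]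
      nlinarith [hreg, hx2pos]
    have habs : |f t/ε| ≤ 2*X*Real.exp (-(t/(8*ε^2))) := by
      have h1' := Real.sqrt_le_sqrt hsq
      rwa [Real.sqrt_sq_eq_abs, Real.sqrt_sq (by positivity)] at h1'
    have htot : |f t/ε - Real.exp (-(lam*t))| ≤ 2*X*Real.exp (-(t/(8*ε^2))) + Real.exp (-(lam*t)) := by
      calc |f t/ε - Real.exp (-(lam*t))| ≤ |f t/ε| + |Real.exp (-(lam*t))| := abs_sub _ _
        _ = |f t/ε| + Real.exp (-(lam*t)) := by rw [abs_of_pos (Real.exp_pos _)]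
        _ ≤ _ := by linarith [habs]
    have hC : lam^(δ-α/2) * (2*X*Real.exp (-(t/(8*ε^2)))) ≤ 128*(t^(-δ)*ε^α) := by
      have h8 := hexpB 8 (by norm_num)
      have hmix : ε^(2*δ) * lam^(δ-α/2) * X ≤ 8 * ε^α := by
        rw [hsplit2, hXdef, mul_assoc, ← Real.rpow_add hx2pos]
        have hb := base_ge hcase.le (show -1 ≤ δ-α/2 + (-(1:ℝ)/2) by linarith)
          (show δ-α/2 + (-(1:ℝ)/2) ≤ 0 by linarith)
        nlinarith [hεα, Real.rpow_pos_of_pos hx2pos (δ-α/2 + (-(1:ℝ)/2))]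
      calc lam^(δ-α/2) * (2*X*Real.exp (-(t/(8*ε^2))))
          ≤ lam^(δ-α/2) * (2*X*(8*(t^(-δ)*ε^(2*δ)))) := by
            apply mul_le_mul_of_nonneg_left _ hlamp.le
            have h9 : (0:ℝ) ≤ 2*X := by positivity
            nlinarith [mul_le_mul_of_nonneg_left h8 h9]
        _ = 16 * t^(-δ) * (ε^(2*δ) * lam^(δ-α/2) * X) := by ring
        _ ≤ 16 * t^(-δ) * (8*ε^α) :=
            mul_le_mul_of_nonneg_left hmix (by positivity)
        _ = 128*(t^(-δ)*ε^α) := by ring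
    have hD : lam^(δ-α/2) * Real.exp (-(lam*t)) ≤ 8*(t^(-δ)*ε^α) := by
      have h1' : lam^(δ-α/2)*Real.exp (-(lam*t)) ≤ lam^(δ-α/2)*(lam^(-δ)*t^(-δ)) :=
        mul_le_mul_of_nonneg_left hE hlamp.le
      have h2' : lam^(δ-α/2)*(lam^(-δ)*t^(-δ)) = lam^(-(α/2))*t^(-δ) := by
        rw [← mul_assoc, hll]
      have h3' : lam^(-(α/2)) = ε^α * (ε^2*lam)^(-(α/2)) := by
        have h := split_pow hε0 hl 0 (-(α/2))
        rw [show (0:ℝ) - 2*(-(α/2)) = α by ring] at h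
        rw [← h, Real.rpow_zero, one_mul]
      have hb := base_ge hcase.le (show -1 ≤ -(α/2) by linarith) (show -(α/2) ≤ 0 by linarith)
      calc lam^(δ-α/2)*Real.exp (-(lam*t)) ≤ lam^(-(α/2))*t^(-δ) := by rw [← h2']; exact h1'
        _ = ε^α * (ε^2*lam)^(-(α/2)) * t^(-δ) := by rw [h3']
        _ ≤ ε^α * 8 * t^(-δ) :=
            mul_le_mul_of_nonneg_right (mul_le_mul_of_nonneg_left hb hεα.le) htδ.le
        _ = 8*(t^(-δ)*ε^α) := by ring
    calc lam^(δ-α/2) * |f t/ε - Real.exp (-(lam*t))|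
        ≤ lam^(δ-α/2) * (2*X*Real.exp (-(t/(8*ε^2))) + Real.exp (-(lam*t))) :=
          mul_le_mul_of_nonneg_left htot hlamp.le
      _ = lam^(δ-α/2) * (2*X*Real.exp (-(t/(8*ε^2)))) + lam^(δ-α/2) * Real.exp (-(lam*t)) := by ring
      _ ≤ 128*(t^(-δ)*ε^α) + 8*(t^(-δ)*ε^α) := add_le_add hC hD
      _ ≤ 200 * t^(-δ) * ε^α := by nlinarith [mul_pos htδ hεα]
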